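/- For every positive integer c₀ and every t > 3(c₀ + 1) with t ≥ 4 and k₁,…,k_t ≥ 1, the graph G = G(t; k₁,…,k_t) satisfies γ₂(G) − a(G) = ⌈t/3⌉ > c₀ + 1. In particular, the difference between the 2-domination number and the annihilation number of a connected graph can be arbitrarily large, disproving the conjecture γ₂(G) ≤ a(G) + 1. -/

import Mathlib

open Classical Finset
noncomputable section

/-- `S` is a 2-dominating set of `G`: every vertex outside `S` has ≥ 2 neighbors in `S`. -/
def IsTwoDomSet {V : Type*} [Fintype V] (G : SimpleGraph V) (S : Finset V) : Prop :=
  ∀ v, v ∉ S → 2 ≤ (G.neighborFinset v ∩ S).card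

/-- The 2-domination number. -/
noncomputable def gamma2 {V : Type*} [Fintype V] (G : SimpleGraph V) : ℕ :=
  sInf {k | ∃ S : Finset V, IsTwoDomSet G S ∧ S.card = k}

/-- `S` is an annihilation set of `G`: the sum of degrees over `S` is at most `m(G)`. -/
def IsAnnSet {V : Type*} [Fintype V] (G : SimpleGraph V) (S : Finset V) : Prop :=
  ∑ v ∈ S, G.degree v ≤ G.edgeFinset.card

/-- The annihilation number: the largest size of an annihilation set (equivalently, the
largest `k` such that the sum of the `k` smallest degrees is at most the edge count). -/
noncomputable def annihilation {V : Type*} [Fintype V] (G : SimpleGraph V) : ℕ :=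
  sSup {k | ∃ S : Finset V, IsAnnSet G S ∧ S.card = k}

/-- Vertices of `G(t; k₁,…,k_t)`: `none` is the hub `w`; `some (Sum.inl ⟨i, j⟩)` is the
`j`-th vertex of the `i`-th cycle `C_{3kᵢ+1}` (vertex `0` is joined to `w`);
`some (Sum.inr ⟨i, p⟩)` is the pendant vertex attached to cycle vertex `p + 1`. -/
abbrev GVert (t : ℕ) (k : Fin t → ℕ) : Type :=
  Option ((Σ i : Fin t, Fin (3 * k i + 1)) ⊕ (Σ i : Fin t, Fin (3 * k i)))

/-- The counterexample graph `G(t; k₁,…,k_t)`. -/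
def GG (t : ℕ) (k : Fin t → ℕ) : SimpleGraph (GVert t k) :=
  SimpleGraph.fromRel (fun a b =>
    match a, b with
    | none, some (Sum.inl ⟨_, j⟩) => (j : ℕ) = 0
    | some (Sum.inl ⟨i, a⟩), some (Sum.inl ⟨i', b⟩) =>
        i = i' ∧ ((b : ℕ) = (a : ℕ) + 1 ∨ ((a : ℕ) = 3 * k i ∧ (b : ℕ) = 0))
    | some (Sum.inl ⟨i, a⟩), some (Sum.inr ⟨i', p⟩) => i = i' ∧ (a : ℕ) = (p : ℕ) + 1
    | _, _ => False)

namespace Cx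
variable {t : ℕ} {k : Fin t → ℕ}

def cyc (i : Fin t) (j : Fin (3 * k i + 1)) : GVert t k := some (Sum.inl ⟨i, j⟩)
def pen (i : Fin t) (p : Fin (3 * k i)) : GVert t k := some (Sum.inr ⟨i, p⟩)

lemma sigma_eq {f : Fin t → ℕ} {i i' : Fin t} {a : Fin (f i)} {b : Fin (f i')} :
    (⟨i, a⟩ : Σ i, Fin (f i)) = ⟨i', b⟩ ↔ i = i' ∧ (a : ℕ) = (b : ℕ) := by
  rw [Sigma.mk.inj_iff]
  constructor
  · rintro ⟨rfl, h⟩; exact ⟨rfl, congrArg Fin.val (eq_of_heq h)⟩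
  · rintro ⟨rfl, h⟩; exact ⟨rfl, heq_of_eq (Fin.ext h)⟩

lemma cyc_eq_cyc {i i' : Fin t} {a : Fin (3*k i+1)} {b : Fin (3*k i'+1)} :
    cyc i a = cyc i' b ↔ i = i' ∧ (a:ℕ) = (b:ℕ) := by
  simp only [cyc, Option.some.injEq, Sum.inl.injEq]; exact sigma_eq (f := fun i => 3 * k i + 1)

lemma pen_eq_pen {i i' : Fin t} {a : Fin (3*k i)} {b : Fin (3*k i')} :
    pen i a = pen i' b ↔ i = i' ∧ (a:ℕ) = (b:ℕ) := by
  simp only [pen, Option.some.injEq, Sum.inr.injEq]; exact sigma_eq (f := fun i => 3 * k i)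

lemma adj_iff (a b : GVert t k) : (GG t k).Adj a b ↔ a ≠ b ∧
    ((match a, b with
    | none, some (Sum.inl ⟨_, j⟩) => (j : ℕ) = 0
    | some (Sum.inl ⟨i, a⟩), some (Sum.inl ⟨i', b⟩) =>
        i = i' ∧ ((b : ℕ) = (a : ℕ) + 1 ∨ ((a : ℕ) = 3 * k i ∧ (b : ℕ) = 0))
    | some (Sum.inl ⟨i, a⟩), some (Sum.inr ⟨i', p⟩) => i = i' ∧ (a : ℕ) = (p : ℕ) + 1
    | _, _ => False) ∨
    (match b, a with
    | none, some (Sum.inl ⟨_, j⟩) => (j : ℕ) = 0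
    | some (Sum.inl ⟨i, a⟩), some (Sum.inl ⟨i', b⟩) =>
        i = i' ∧ ((b : ℕ) = (a : ℕ) + 1 ∨ ((a : ℕ) = 3 * k i ∧ (b : ℕ) = 0))
    | some (Sum.inl ⟨i, a⟩), some (Sum.inr ⟨i', p⟩) => i = i' ∧ (a : ℕ) = (p : ℕ) + 1
    | _, _ => False)) := by
  rw [GG, SimpleGraph.fromRel_adj]

lemma adj_w_cyc0 (i : Fin t) (j : Fin (3*k i+1)) (hj : (j:ℕ) = 0) :
    (GG t k).Adj none (cyc i j) := by
  rw [adj_iff]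
  exact ⟨by simp [cyc], Or.inl hj⟩

lemma adj_cyc_succ (i : Fin t) (a b : Fin (3*k i+1)) (h : (b:ℕ) = (a:ℕ) + 1) :
    (GG t k).Adj (cyc i a) (cyc i b) := by
  rw [adj_iff]
  refine ⟨?_, Or.inl ⟨rfl, Or.inl h⟩⟩
  simp only [cyc_eq_cyc, ne_eq]
  rintro ⟨-, h2⟩; omega

lemma adj_cyc_wrap (i : Fin t) (hki : 1 ≤ k i) (a b : Fin (3*k i+1))
    (ha : (a:ℕ) = 3 * k i) (hb : (b:ℕ) = 0) :
    (GG t k).Adj (cyc i a) (cyc i b) := by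
  rw [adj_iff]
  refine ⟨?_, Or.inl ⟨rfl, Or.inr ⟨ha, hb⟩⟩⟩
  simp only [cyc_eq_cyc, ne_eq]
  rintro ⟨-, h2⟩; omega

lemma adj_cyc_pen (i : Fin t) (a : Fin (3*k i+1)) (p : Fin (3*k i)) (h : (a:ℕ) = (p:ℕ) + 1) :
    (GG t k).Adj (cyc i a) (pen i p) := by
  rw [adj_iff]
  exact ⟨by simp [cyc, pen], Or.inl ⟨rfl, h⟩⟩


lemma cyc_ext {i : Fin t} {a b : Fin (3*k i+1)} (h : (a:ℕ) = (b:ℕ)) : cyc i a = cyc i b :=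
  cyc_eq_cyc.mpr ⟨rfl, h⟩

lemma nf_pen (i : Fin t) (p : Fin (3*k i)) :
    (GG t k).neighborFinset (pen i p) = {cyc i ⟨(p:ℕ)+1, by omega⟩} := by
  ext u
  rw [SimpleGraph.mem_neighborFinset, adj_iff, Finset.mem_singleton]
  rcases u with _ | (⟨i',j'⟩ | ⟨i',p'⟩)
  · simp [cyc, pen]
  · by_cases hii : i' = i
    · subst hii
      simp [cyc, pen, Sigma.mk.inj_iff, heq_iff_eq, Fin.ext_iff]
      all_goals omega
    · simp [cyc, pen, Sigma.mk.inj_iff, hii, Ne.symm hii]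
  · by_cases hii : i' = i
    · subst hii
      simp [cyc, pen, Sigma.mk.inj_iff, heq_iff_eq, Fin.ext_iff]
      all_goals omega
    · simp [cyc, pen, Sigma.mk.inj_iff, hii, Ne.symm hii]

lemma nf_w (hk : ∀ i, 1 ≤ k i) :
    (GG t k).neighborFinset none =
      (univ : Finset (Fin t)).image (fun i => cyc i ⟨0, by omega⟩) := by
  ext u
  simp only [SimpleGraph.mem_neighborFinset, Finset.mem_image, Finset.mem_univ, true_and]
  constructor
  · intro h
    rw [adj_iff] at h
    rcases u with _ | (⟨i',j'⟩ | ⟨i',p'⟩)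
    · simp at h
    · refine ⟨i', ?_⟩
      simp [cyc, pen] at h
      exact cyc_ext (by rw [h]; rfl)
    · simp [cyc, pen] at h
  · rintro ⟨i, rfl⟩
    exact adj_w_cyc0 i _ rfl

lemma nf_cyc0 (hk : ∀ i, 1 ≤ k i) (i : Fin t) (j : Fin (3*k i+1)) (hj : (j:ℕ) = 0) :
    (GG t k).neighborFinset (cyc i j) =
      {none, cyc i ⟨1, by have := hk i; omega⟩, cyc i ⟨3*k i, by omega⟩} := by
  have hki := hk i
  ext u
  rw [SimpleGraph.mem_neighborFinset, adj_iff]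
  rcases u with _ | (⟨i',j'⟩ | ⟨i',p'⟩)
  · simp [cyc, pen, hj]
  · rw [Finset.mem_insert, Finset.mem_insert, Finset.mem_singleton]
    by_cases hii : i' = i
    · subst hii
      simp [cyc, pen, Sigma.mk.inj_iff, heq_iff_eq, Fin.ext_iff, -Fin.val_eq_zero_iff, hj]
      all_goals omega
    · simp [cyc, pen, Sigma.mk.inj_iff, hii, Ne.symm hii]
  · by_cases hii : i' = i
    · subst hii
      simp [cyc, pen, Sigma.mk.inj_iff, heq_iff_eq, Fin.ext_iff, hj]
      all_goals omega
    · simp [cyc, pen, Sigma.mk.inj_iff, hii, Ne.symm hii]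

lemma nf_cyc1 (hk : ∀ i, 1 ≤ k i) (i : Fin t) (j : Fin (3*k i+1)) (hj : 1 ≤ (j:ℕ)) :
    (GG t k).neighborFinset (cyc i j) =
      {cyc i ⟨(j:ℕ)-1, by omega⟩,
       cyc i (if _ : (j:ℕ) = 3*k i then ⟨0, by omega⟩ else ⟨(j:ℕ)+1, by omega⟩),
       pen i ⟨(j:ℕ)-1, by have := hk i; have := j.isLt; omega⟩} := by
  have hki := hk i
  by_cases h3 : (j:ℕ) = 3*k i
  all_goals (
    ext u
    rw [SimpleGraph.mem_neighborFinset, adj_iff]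
    rcases u with _ | (⟨i',j'⟩ | ⟨i',p'⟩))
  · simp [cyc, pen, h3]
    all_goals omega
  · rw [Finset.mem_insert, Finset.mem_insert, Finset.mem_singleton]
    by_cases hii : i' = i
    · subst hii
      simp [cyc, pen, Sigma.mk.inj_iff, heq_iff_eq, Fin.ext_iff, -Fin.val_eq_zero_iff, h3]
      all_goals omega
    · simp [cyc, pen, Sigma.mk.inj_iff, hii, Ne.symm hii, h3]
  · rw [Finset.mem_insert, Finset.mem_insert, Finset.mem_singleton]
    by_cases hii : i' = i
    · subst hii
      simp [cyc, pen, Sigma.mk.inj_iff, heq_iff_eq, Fin.ext_iff, h3]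
      all_goals omega
    · simp [cyc, pen, Sigma.mk.inj_iff, hii, Ne.symm hii, h3]
  · simp [cyc, pen, h3, -Fin.val_eq_zero_iff]
    all_goals omega
  · rw [Finset.mem_insert, Finset.mem_insert, Finset.mem_singleton]
    by_cases hii : i' = i
    · subst hii
      simp [cyc, pen, Sigma.mk.inj_iff, heq_iff_eq, Fin.ext_iff, -Fin.val_eq_zero_iff, h3]
      all_goals omega
    · simp [cyc, pen, Sigma.mk.inj_iff, hii, Ne.symm hii, h3]
  · rw [Finset.mem_insert, Finset.mem_insert, Finset.mem_singleton]
    by_cases hii : i' = i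
    · subst hii
      simp [cyc, pen, Sigma.mk.inj_iff, heq_iff_eq, Fin.ext_iff, h3]
      all_goals omega
    · simp [cyc, pen, Sigma.mk.inj_iff, hii, Ne.symm hii, h3]


lemma degree_pen (i : Fin t) (p : Fin (3*k i)) : (GG t k).degree (pen i p) = 1 := by
  show ((GG t k).neighborFinset (pen i p)).card = 1
  rw [nf_pen]; exact Finset.card_singleton _

lemma degree_w (hk : ∀ i, 1 ≤ k i) : (GG t k).degree (none : GVert t k) = t := by
  show ((GG t k).neighborFinset none).card = t
  rw [nf_w hk, Finset.card_image_of_injective _ (fun a b h => (cyc_eq_cyc.mp h).1),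
    card_univ, Fintype.card_fin]

lemma card3 {α : Type*} [DecidableEq α] (a b c : α) (hab : a ≠ b) (hac : a ≠ c) (hbc : b ≠ c) :
    ({a, b, c} : Finset α).card = 3 := by
  rw [Finset.card_insert_of_notMem (by simp [hab, hac]),
    Finset.card_insert_of_notMem (by simp [hbc]), Finset.card_singleton]

lemma degree_cyc (hk : ∀ i, 1 ≤ k i) (i : Fin t) (j : Fin (3*k i+1)) :
    (GG t k).degree (cyc i j) = 3 := by
  have hki := hk i
  have hlt := j.isLt
  show ((GG t k).neighborFinset (cyc i j)).card = 3
  rcases Nat.eq_zero_or_pos (j:ℕ) with hj | hj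
  · rw [nf_cyc0 hk i j hj]
    refine card3 _ _ _ (by simp [cyc]) (by simp [cyc]) ?_
    rw [Ne, cyc_eq_cyc]; rintro ⟨-, h⟩; simp at h <;> omega
  · rw [nf_cyc1 hk i j hj]
    by_cases h3 : (j:ℕ) = 3*k i
    · rw [dif_pos h3]
      refine card3 _ _ _ ?_ (by simp [cyc, pen]) (by simp [cyc, pen])
      rw [Ne, cyc_eq_cyc]; rintro ⟨-, h⟩; simp at h <;> omega
    · rw [dif_neg h3]
      refine card3 _ _ _ ?_ (by simp [cyc, pen]) (by simp [cyc, pen])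
      rw [Ne, cyc_eq_cyc]; rintro ⟨-, h⟩; simp at h <;> omega

lemma degree_eq (hk : ∀ i, 1 ≤ k i) (v : GVert t k) :
    (GG t k).degree v = (match v with
      | none => t
      | some (Sum.inl _) => 3
      | some (Sum.inr _) => 1) := by
  rcases v with _ | (⟨i,j⟩ | ⟨i,p⟩)
  · exact degree_w hk
  · exact degree_cyc hk i j
  · exact degree_pen i p

lemma sum_degrees (hk : ∀ i, 1 ≤ k i) :
    ∑ v : GVert t k, (GG t k).degree v = 12 * (∑ i, k i) + 4 * t := by
  have h1 : ∀ v : GVert t k, (GG t k).degree v = (match v with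
      | none => t
      | some (Sum.inl _) => 3
      | some (Sum.inr _) => 1) := degree_eq hk
  rw [Fintype.sum_congr _ _ h1]
  rw [Fintype.sum_option, Fintype.sum_sum_type]
  simp only [Finset.sum_const, card_univ, smul_eq_mul, Fintype.card_sigma, Fintype.card_fin]
  have h2 : ∑ i, (3 * k i + 1) = 3 * (∑ i, k i) + t := by
    rw [Finset.sum_add_distrib, Finset.mul_sum]
    simp
  have h3 : ∑ i, 3 * k i = 3 * (∑ i, k i) := by
    rw [Finset.mul_sum]
  omega

lemma edge_count (hk : ∀ i, 1 ≤ k i) :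
    (GG t k).edgeFinset.card = 6 * (∑ i, k i) + 2 * t := by
  have h := SimpleGraph.sum_degrees_eq_twice_card_edges (GG t k)
  rw [sum_degrees hk] at h
  omega


lemma mem_inter' {α : Type*} (D : DecidableEq α) {A B : Finset α} {x : α}
    (h1 : x ∈ A) (h2 : x ∈ B) : x ∈ @Inter.inter _ (@Finset.instInter α D) A B := by
  letI := D
  exact Finset.mem_inter.mpr ⟨h1, h2⟩

lemma of_mem_inter {α : Type*} (D : DecidableEq α) {A B : Finset α} {x : α}
    (h : x ∈ @Inter.inter _ (@Finset.instInter α D) A B) : x ∈ A ∧ x ∈ B := by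
  letI := D
  exact Finset.mem_inter.mp h

lemma two_le_card {α : Type*} {C : Finset α} {a b : α} (hab : a ≠ b)
    (ha : a ∈ C) (hb : b ∈ C) : 2 ≤ C.card := by
  rw [← Finset.card_pair hab]
  refine Finset.card_le_card ?_
  intro x hx
  simp only [Finset.mem_insert, Finset.mem_singleton] at hx
  rcases hx with rfl | rfl <;> assumption

variable (t k) in
def DomF : ((Σ i : Fin t, Fin (3 * k i)) ⊕ (Σ i : Fin t, Fin (k i + 1))) → GVert t k
  | Sum.inl ⟨i, p⟩ => pen i p
  | Sum.inr ⟨i, m⟩ => cyc i ⟨3 * (m:ℕ), by have := m.isLt; omega⟩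

variable (t k) in
def DomS : Finset (GVert t k) := univ.image (DomF t k)

lemma DomF_inj : Function.Injective (DomF t k) := by
  rintro (⟨i, p⟩ | ⟨i, m⟩) (⟨i', p'⟩ | ⟨i', m'⟩) h <;> simp only [DomF] at h
  · obtain ⟨rfl, h2⟩ := pen_eq_pen.mp h
    rw [Sum.inl.injEq]
    exact sigma_eq (f := fun i => 3 * k i) |>.mpr ⟨rfl, h2⟩
  · exact absurd h (by simp [cyc, pen])
  · exact absurd h (by simp [cyc, pen])
  · obtain ⟨rfl, h2⟩ := cyc_eq_cyc.mp h
    rw [Sum.inr.injEq]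
    refine sigma_eq (f := fun i => k i + 1) |>.mpr ⟨rfl, ?_⟩
    simp at h2
    omega

lemma DomS_card : (DomS t k).card = 4 * (∑ i, k i) + t := by
  rw [DomS, Finset.card_image_of_injective _ DomF_inj, card_univ, Fintype.card_sum]
  simp only [Fintype.card_sigma, Fintype.card_fin]
  have h2 : ∑ i, (k i + 1) = (∑ i, k i) + t := by
    rw [Finset.sum_add_distrib]; simp
  have h3 : ∑ i, 3 * k i = 3 * (∑ i, k i) := by rw [Finset.mul_sum]
  omega

lemma pen_mem_DomS (i : Fin t) (p : Fin (3*k i)) : pen i p ∈ DomS t k :=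
  Finset.mem_image.mpr ⟨Sum.inl ⟨i, p⟩, Finset.mem_univ _, rfl⟩

lemma cyc_mem_DomS (i : Fin t) (j : Fin (3*k i+1)) (h : (j:ℕ) % 3 = 0) :
    cyc i j ∈ DomS t k := by
  have hlt := j.isLt
  refine Finset.mem_image.mpr ⟨Sum.inr ⟨i, ⟨(j:ℕ)/3, by omega⟩⟩, Finset.mem_univ _, ?_⟩
  show cyc i _ = cyc i j
  exact cyc_ext (by simp; omega)

lemma DomS_isTwoDom (hk : ∀ i, 1 ≤ k i) (ht4 : 4 ≤ t) : IsTwoDomSet (GG t k) (DomS t k) := by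
  intro v hv
  rcases v with _ | (⟨i, j⟩ | ⟨i, p⟩)
  · -- hub
    refine two_le_card (a := cyc ⟨0, by omega⟩ ⟨0, by omega⟩) (b := cyc ⟨1, by omega⟩ ⟨0, by omega⟩)
      ?_ ?_ ?_
    · rw [Ne, cyc_eq_cyc]
      rintro ⟨h1, -⟩
      exact absurd (congrArg Fin.val h1) (by simp)
    · exact mem_inter' _ (SimpleGraph.mem_neighborFinset _ _ _ |>.mpr (adj_w_cyc0 _ _ rfl))
        (cyc_mem_DomS _ _ (by simp))
    · exact mem_inter' _ (SimpleGraph.mem_neighborFinset _ _ _ |>.mpr (adj_w_cyc0 _ _ rfl))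
        (cyc_mem_DomS _ _ (by simp))
  · -- cycle vertex not in S
    have hki := hk i
    have hlt := j.isLt
    have hmod : (j:ℕ) % 3 ≠ 0 := fun h => hv (cyc_mem_DomS i j h)
    have hj1 : 1 ≤ (j:ℕ) := by omega
    have hj3k : (j:ℕ) ≠ 3 * k i := by omega
    have hpadj : (GG t k).Adj (cyc i j) (pen i ⟨(j:ℕ)-1, by omega⟩) :=
      adj_cyc_pen i j _ (by simp; omega)
    rcases Nat.lt_or_ge ((j:ℕ) % 3) 2 with h2 | h2
    · -- j % 3 = 1 : use predecessor
      refine two_le_card (a := cyc i ⟨(j:ℕ)-1, by omega⟩) (b := pen i ⟨(j:ℕ)-1, by omega⟩)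
        (by simp [cyc, pen]) ?_ ?_
      · exact mem_inter' _ (SimpleGraph.mem_neighborFinset _ _ _ |>.mpr
          ((adj_cyc_succ i ⟨(j:ℕ)-1, by omega⟩ j (by simp; omega)).symm))
          (cyc_mem_DomS _ _ (by simp; omega))
      · exact mem_inter' _ (SimpleGraph.mem_neighborFinset _ _ _ |>.mpr hpadj)
          (pen_mem_DomS _ _)
    · -- j % 3 = 2 : use successor
      refine two_le_card (a := cyc i ⟨(j:ℕ)+1, by omega⟩) (b := pen i ⟨(j:ℕ)-1, by omega⟩)
        (by simp [cyc, pen]) ?_ ?_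
      · exact mem_inter' _ (SimpleGraph.mem_neighborFinset _ _ _ |>.mpr
          (adj_cyc_succ i j ⟨(j:ℕ)+1, by omega⟩ (by simp)))
          (cyc_mem_DomS _ _ (by simp; omega))
      · exact mem_inter' _ (SimpleGraph.mem_neighborFinset _ _ _ |>.mpr hpadj)
          (pen_mem_DomS _ _)
  · exact absurd (pen_mem_DomS i p) hv

lemma gamma2_le (hk : ∀ i, 1 ≤ k i) (ht4 : 4 ≤ t) :
    gamma2 (GG t k) ≤ 4 * (∑ i, k i) + t :=
  Nat.sInf_le ⟨DomS t k, DomS_isTwoDom hk ht4, DomS_card⟩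


lemma card_pair_le {α : Type*} [DecidableEq α] (a b : α) : ({a, b} : Finset α).card ≤ 2 :=
  le_trans (Finset.card_insert_le _ _) (by simp)

lemma card_triple_le {α : Type*} [DecidableEq α] (a b c : α) : ({a, b, c} : Finset α).card ≤ 3 :=
  le_trans (Finset.card_insert_le _ _) (by simpa using Nat.add_le_add_right (card_pair_le b c) 1)

def covS (n m : ℕ) : Finset ℕ :=
  (Finset.Icc 1 (3*n)).filter (fun j => j = m ∨ j = m+1 ∨ m = j+1 ∨ (m = 0 ∧ j = 3*n))

lemma mem_covS {n m x : ℕ} :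
    x ∈ covS n m ↔ (1 ≤ x ∧ x ≤ 3*n) ∧ (x = m ∨ x = m+1 ∨ m = x+1 ∨ (m = 0 ∧ x = 3*n)) := by
  rw [covS, Finset.mem_filter, Finset.mem_Icc]

lemma covS_card3 (n m : ℕ) : (covS n m).card ≤ 3 := by
  by_cases hm0 : m = 0
  · calc (covS n m).card ≤ ({1, 3*n} : Finset ℕ).card := Finset.card_le_card (by
          intro x hx
          rw [mem_covS] at hx
          simp only [Finset.mem_insert, Finset.mem_singleton]
          omega)
      _ ≤ 2 := card_pair_le _ _
      _ ≤ 3 := by omega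
  · calc (covS n m).card ≤ ({m, m+1, m-1} : Finset ℕ).card := Finset.card_le_card (by
          intro x hx
          rw [mem_covS] at hx
          simp only [Finset.mem_insert, Finset.mem_singleton]
          omega)
      _ ≤ 3 := card_triple_le _ _ _

lemma covS_card2 (n m : ℕ) (hn : 1 ≤ n) (hm : m = 0 ∨ m = 1 ∨ m = 3*n) :
    (covS n m).card ≤ 2 := by
  have sub2 : ∀ a b : ℕ, covS n m ⊆ {a, b} → (covS n m).card ≤ 2 :=
    fun a b h => le_trans (Finset.card_le_card h) (card_pair_le a b)
  rcases hm with rfl | rfl | rfl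
  · refine sub2 1 (3*n) ?_
    intro x hx; rw [mem_covS] at hx
    simp only [Finset.mem_insert, Finset.mem_singleton]; omega
  · refine sub2 1 2 ?_
    intro x hx; rw [mem_covS] at hx
    simp only [Finset.mem_insert, Finset.mem_singleton]; omega
  · refine sub2 (3*n-1) (3*n) ?_
    intro x hx; rw [mem_covS] at hx
    simp only [Finset.mem_insert, Finset.mem_singleton]; omega

lemma cycle_lb (n : ℕ) (hn : 1 ≤ n) (T : Finset ℕ)
    (hcov : ∀ j, 1 ≤ j → j ≤ 3*n → ∃ m ∈ T, j = m ∨ j = m + 1 ∨ m = j + 1 ∨ (m = 0 ∧ j = 3*n))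
    (h0 : 0 ∈ T ∨ 1 ∈ T ∨ 3*n ∈ T) :
    n + 1 ≤ T.card := by
  classical
  have hsub : Finset.Icc 1 (3*n) ⊆ T.biUnion (covS n) := by
    intro j hj
    rw [Finset.mem_Icc] at hj
    obtain ⟨m, hm, hc⟩ := hcov j hj.1 hj.2
    exact Finset.mem_biUnion.mpr ⟨m, hm, mem_covS.mpr ⟨hj, hc⟩⟩
  obtain ⟨m₀, hm₀T, hm₀⟩ : ∃ m₀ ∈ T, (m₀ = 0 ∨ m₀ = 1 ∨ m₀ = 3*n) := by
    rcases h0 with h | h | h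
    exacts [⟨0, h, Or.inl rfl⟩, ⟨1, h, Or.inr (Or.inl rfl)⟩, ⟨3*n, h, Or.inr (Or.inr rfl)⟩]
  have h1 : 3*n ≤ (T.biUnion (covS n)).card := by
    calc 3*n = (Finset.Icc 1 (3*n)).card := by rw [Nat.card_Icc]; omega
      _ ≤ _ := Finset.card_le_card hsub
  have h2 : (T.biUnion (covS n)).card ≤ ∑ m ∈ T, (covS n m).card := Finset.card_biUnion_le
  have h3 : ∑ m ∈ T, (covS n m).card = (covS n m₀).card + ∑ m ∈ T.erase m₀, (covS n m).card :=
    (Finset.add_sum_erase T _ hm₀T).symm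
  have h4 : ∑ m ∈ T.erase m₀, (covS n m).card ≤ (T.erase m₀).card * 3 :=
    Finset.sum_le_card_nsmul _ _ 3 (fun x _ => covS_card3 n x)
  have h5 : (T.erase m₀).card = T.card - 1 := Finset.card_erase_of_mem hm₀T
  have h6 : 1 ≤ T.card := Finset.card_pos.mpr ⟨m₀, hm₀T⟩
  have h7 := covS_card2 n m₀ hn hm₀
  omega


lemma inter_card_le_left {α : Type*} (D : DecidableEq α) (A B : Finset α) :
    (@Inter.inter _ (@Finset.instInter α D) A B).card ≤ A.card := by
  letI := D
  exact Finset.card_le_card Finset.inter_subset_left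

lemma two_of_three' {α : Type*} (D : DecidableEq α) {N S : Finset α} {a b c : α}
    (hN : ∀ x ∈ N, x = a ∨ x = b ∨ x = c)
    (hcard : 2 ≤ (@Inter.inter _ (@Finset.instInter α D) N S).card) : a ∈ S ∨ b ∈ S := by
  letI := D
  by_contra hcon
  push_neg at hcon
  have hsub : N ∩ S ⊆ {c} := by
    intro x hx
    rw [Finset.mem_inter] at hx
    rcases hN x hx.1 with rfl | rfl | rfl
    · exact absurd hx.2 hcon.1
    · exact absurd hx.2 hcon.2
    · exact Finset.mem_singleton_self _
  have := Finset.card_le_card hsub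
  rw [Finset.card_singleton] at this
  omega

variable {S : Finset (GVert t k)}

lemma pens_sub (hS : IsTwoDomSet (GG t k) S) (i : Fin t) (p : Fin (3*k i)) : pen i p ∈ S := by
  by_contra h
  have h2 := hS _ h
  rw [nf_pen] at h2
  have h3 := le_trans h2 (inter_card_le_left _ _ _)
  rw [Finset.card_singleton] at h3
  omega

variable (S) in
def TC (i : Fin t) : Finset (Fin (3*k i+1)) := univ.filter (fun j => cyc i j ∈ S)

lemma TC_lb (hk : ∀ i, 1 ≤ k i) (hS : IsTwoDomSet (GG t k) S) (i : Fin t) :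
    k i + 1 ≤ (TC S i).card := by
  have hki := hk i
  have himg : ((TC S i).image Fin.val).card = (TC S i).card :=
    Finset.card_image_of_injective _ Fin.val_injective
  rw [← himg]
  have hmem : ∀ (j : ℕ) (hj : j < 3*k i+1), cyc i ⟨j, hj⟩ ∈ S → j ∈ (TC S i).image Fin.val :=
    fun j hj h => Finset.mem_image.mpr ⟨⟨j, hj⟩, Finset.mem_filter.mpr ⟨Finset.mem_univ _, h⟩, rfl⟩
  refine cycle_lb (k i) hki _ ?_ ?_
  · intro j hj1 hj2
    by_cases hjS : cyc i ⟨j, by omega⟩ ∈ S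
    · exact ⟨j, hmem j (by omega) hjS, Or.inl rfl⟩
    · have h2 := hS _ hjS
      rw [nf_cyc1 hk i ⟨j, by omega⟩ (by simpa using hj1)] at h2
      have halt := two_of_three' _ (fun x hx => by simp at hx; tauto) h2
      rcases halt with hA | hB
      · exact ⟨j-1, hmem (j-1) (by omega) hA, by omega⟩
      · by_cases h3 : j = 3*k i
        · rw [dif_pos (by simpa using h3)] at hB
          refine ⟨0, hmem 0 (by omega) hB, ?_⟩
          right; right; right; exact ⟨rfl, h3⟩
        · rw [dif_neg (by simpa using h3)] at hB
          exact ⟨j+1, hmem (j+1) (by omega) hB,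
            by omega⟩
  · by_cases h0S : cyc i ⟨0, by omega⟩ ∈ S
    · exact Or.inl (hmem 0 (by omega) h0S)
    · have h2 := hS _ h0S
      rw [nf_cyc0 hk i ⟨0, by omega⟩ rfl] at h2
      have halt := two_of_three' (a := cyc i ⟨1, by omega⟩) (b := cyc i ⟨3*k i, by omega⟩)
        (c := (none : GVert t k)) _ (fun x hx => by simp at hx; tauto) h2
      rcases halt with hA | hB
      · exact Or.inr (Or.inl (hmem 1 (by omega) hA))
      · exact Or.inr (Or.inr (hmem (3*k i) (by omega) hB))

variable (t k) in
def PF : Finset (GVert t k) := univ.image (fun x : Σ i : Fin t, Fin (3*k i) => some (Sum.inr x))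

variable (t k) in
def CALL : Finset (GVert t k) := univ.image (fun x : Σ i : Fin t, Fin (3*k i+1) => some (Sum.inl x))

lemma PF_card : (PF t k).card = 3 * (∑ i, k i) := by
  rw [PF, Finset.card_image_of_injective _
    (fun a b h => Sum.inr_injective (Option.some_injective _ h)), card_univ]
  simp only [Fintype.card_sigma, Fintype.card_fin]
  rw [Finset.mul_sum]

lemma CALL_card : (CALL t k).card = 3 * (∑ i, k i) + t := by
  rw [CALL, Finset.card_image_of_injective _
    (fun a b h => Sum.inl_injective (Option.some_injective _ h)), card_univ]
  simp only [Fintype.card_sigma, Fintype.card_fin]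
  rw [Finset.sum_add_distrib, Finset.mul_sum]
  simp

lemma gamma2_ge (hk : ∀ i, 1 ≤ k i) (hS : IsTwoDomSet (GG t k) S) :
    4 * (∑ i, k i) + t ≤ S.card := by
  classical
  have hPF : PF t k ⊆ S := by
    intro v hv
    rw [PF, Finset.mem_image] at hv
    obtain ⟨⟨i, p⟩, -, rfl⟩ := hv
    exact pens_sub hS i p
  have hU : PF t k ∪ (S ∩ CALL t k) ⊆ S := by
    intro v hv
    rcases Finset.mem_union.mp hv with h | h
    exacts [hPF h, (Finset.mem_inter.mp h).1]
  have hdisj : Disjoint (PF t k) (S ∩ CALL t k) := by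
    rw [Finset.disjoint_left]
    intro v hv hv2
    rw [PF, Finset.mem_image] at hv
    have hv3 := (Finset.mem_inter.mp hv2).2
    rw [CALL, Finset.mem_image] at hv3
    obtain ⟨x, -, rfl⟩ := hv
    obtain ⟨y, -, hy⟩ := hv3
    exact absurd hy (by simp)
  have hSC : S ∩ CALL t k = (univ.sigma (fun i => TC S i)).image
      (fun x : Σ i : Fin t, Fin (3*k i+1) => some (Sum.inl x)) := by
    ext v
    rw [Finset.mem_inter, CALL, Finset.mem_image, Finset.mem_image]
    constructor
    · rintro ⟨hvS, ⟨x, -, rfl⟩⟩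
      refine ⟨x, Finset.mem_sigma.mpr ⟨Finset.mem_univ _, ?_⟩, rfl⟩
      rw [TC, Finset.mem_filter]
      exact ⟨Finset.mem_univ _, hvS⟩
    · rintro ⟨x, hx, rfl⟩
      have := (Finset.mem_sigma.mp hx).2
      rw [TC, Finset.mem_filter] at this
      exact ⟨this.2, ⟨x, Finset.mem_univ _, rfl⟩⟩
  have hcardSC : (S ∩ CALL t k).card = ∑ i, (TC S i).card := by
    rw [hSC, Finset.card_image_of_injective _
      (fun a b h => Sum.inl_injective (Option.some_injective _ h)), Finset.card_sigma]
  have hsum : ∑ i, (k i + 1) ≤ ∑ i, (TC S i).card :=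
    Finset.sum_le_sum (fun i _ => TC_lb hk hS i)
  have hsum2 : ∑ i, (k i + 1) = (∑ i, k i) + t := by
    rw [Finset.sum_add_distrib]; simp
  have hcards := Finset.card_le_card hU
  rw [Finset.card_union_of_disjoint hdisj, PF_card, hcardSC] at hcards
  omega

lemma gamma2_ge' (hk : ∀ i, 1 ≤ k i) : 4 * (∑ i, k i) + t ≤ gamma2 (GG t k) := by
  refine le_csInf ⟨(univ : Finset (GVert t k)).card, univ, fun v hv => absurd (mem_univ v) hv, rfl⟩ ?_
  rintro x ⟨S, hS, rfl⟩
  exact gamma2_ge hk hS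


variable (t k) in
def EW : GVert t k → ℕ
  | some (Sum.inr _) => 2
  | _ => 0

lemma sum_EW : ∑ v : GVert t k, EW t k v = 6 * (∑ i, k i) := by
  rw [Fintype.sum_option, Fintype.sum_sum_type]
  simp only [EW, Finset.sum_const, card_univ, smul_eq_mul, Fintype.card_sigma, Fintype.card_fin]
  have h3 : ∑ i, 3 * k i = 3 * (∑ i, k i) := by rw [Finset.mul_sum]
  omega

lemma ann_le (hk : ∀ i, 1 ≤ k i) (ht4 : 4 ≤ t) (hS : IsAnnSet (GG t k) S) :
    S.card ≤ 4 * (∑ i, k i) + (2*t)/3 := by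
  have hpt : ∀ v : GVert t k, 3 ≤ (GG t k).degree v + EW t k v := by
    intro v
    rw [degree_eq hk]
    rcases v with _ | (x | x) <;> simp [EW] <;> omega
  have h1 : 3 * S.card ≤ ∑ v ∈ S, ((GG t k).degree v + EW t k v) := by
    calc 3 * S.card = ∑ _v ∈ S, 3 := by rw [Finset.sum_const, smul_eq_mul, mul_comm]
      _ ≤ _ := Finset.sum_le_sum (fun v _ => hpt v)
  rw [Finset.sum_add_distrib] at h1
  have h2 : ∑ v ∈ S, EW t k v ≤ ∑ v : GVert t k, EW t k v :=
    Finset.sum_le_sum_of_subset (Finset.subset_univ S)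
  rw [sum_EW] at h2
  have h3 := hS
  rw [IsAnnSet, edge_count hk] at h3
  omega

lemma ann_upper (hk : ∀ i, 1 ≤ k i) (ht4 : 4 ≤ t) :
    annihilation (GG t k) ≤ 4 * (∑ i, k i) + (2*t)/3 := by
  refine csSup_le ⟨0, ∅, by simp [IsAnnSet], rfl⟩ ?_
  rintro x ⟨S, hS, rfl⟩
  exact ann_le hk ht4 hS

lemma ann_lower (hk : ∀ i, 1 ≤ k i) (ht4 : 4 ≤ t) :
    4 * (∑ i, k i) + (2*t)/3 ≤ annihilation (GG t k) := by
  classical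
  obtain ⟨C', hC'sub, hC'card⟩ := Finset.exists_subset_card_eq (s := CALL t k)
    (n := (∑ i, k i) + (2*t)/3) (by rw [CALL_card]; omega)
  have hdisj : Disjoint (PF t k) C' := by
    rw [Finset.disjoint_left]
    intro v hv hv2
    rw [PF, Finset.mem_image] at hv
    have hv3 := hC'sub hv2
    rw [CALL, Finset.mem_image] at hv3
    obtain ⟨x, -, rfl⟩ := hv
    obtain ⟨y, -, hy⟩ := hv3
    exact absurd hy (by simp)
  have hcard : (PF t k ∪ C').card = 4 * (∑ i, k i) + (2*t)/3 := by
    rw [Finset.card_union_of_disjoint hdisj, PF_card, hC'card]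
    omega
  have hsum1 : ∑ v ∈ PF t k, (GG t k).degree v = 3 * (∑ i, k i) := by
    rw [Finset.sum_congr rfl (g := fun _ => 1) (fun v hv => by
      rw [PF, Finset.mem_image] at hv
      obtain ⟨⟨i, p⟩, -, rfl⟩ := hv
      exact degree_pen i p)]
    rw [Finset.sum_const, smul_eq_mul, mul_one, PF_card]
  have hsum2 : ∑ v ∈ C', (GG t k).degree v = ((∑ i, k i) + (2*t)/3) * 3 := by
    rw [Finset.sum_congr rfl (g := fun _ => 3) (fun v hv => by
      have hv3 := hC'sub hv
      rw [CALL, Finset.mem_image] at hv3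
      obtain ⟨⟨i, j⟩, -, rfl⟩ := hv3
      exact degree_cyc hk i j)]
    rw [Finset.sum_const, smul_eq_mul, hC'card]
  have hann : IsAnnSet (GG t k) (PF t k ∪ C') := by
    rw [IsAnnSet, edge_count hk, Finset.sum_union hdisj, hsum1, hsum2]
    omega
  refine le_csSup ⟨4 * (∑ i, k i) + (2*t)/3, ?_⟩ ⟨PF t k ∪ C', hann, hcard⟩
  rintro x ⟨S, hS, rfl⟩
  exact ann_le hk ht4 hS

end Cx

open Cx in
/-- Theorem 2.1: `γ₂(G(t;k)) − a(G(t;k)) = ⌈t/3⌉ > c₀ + 1` whenever `t > 3(c₀+1)`;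
so the 2-domination number can exceed the annihilation number by arbitrarily much,
disproving the conjecture `γ₂(G) ≤ a(G) + 1`. -/
theorem stmt12 (c₀ : ℕ) (hc₀ : 1 ≤ c₀) (t : ℕ) (ht4 : 4 ≤ t) (ht : 3 * (c₀ + 1) < t)
    (k : Fin t → ℕ) (hk : ∀ i, 1 ≤ k i) :
    gamma2 (GG t k) - annihilation (GG t k) = (t + 2) / 3 ∧
    c₀ + 1 < gamma2 (GG t k) - annihilation (GG t k) := by
  have hg1 := gamma2_le hk ht4
  have hg2 := gamma2_ge' (t := t) (k := k) hk
  have ha1 := ann_upper hk ht4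
  have ha2 := ann_lower hk ht4
  have hg : gamma2 (GG t k) = 4 * (∑ i, k i) + t := le_antisymm hg1 hg2
  have ha : annihilation (GG t k) = 4 * (∑ i, k i) + (2*t)/3 := le_antisymm ha1 ha2
  rw [hg, ha]
  omega
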